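/- Let (X,d) be a metric space, Ω, Δ nonempty subsets of X, and Ξ : X → X a cyclic orbital contraction on Ω ∪ Δ with constant η ∈ (0,1). Fix ς₀ ∈ Ω and let ς₁ = Ξς₀. Then for all nonnegative integers a, b with a − b odd, d(Ξ^a ς₁, Ξ^b ς₁) ≤ η · sup{d(Ξ^i ς₀, Ξ^j ς₀) : i − j odd} + (1 − η) · dist(Ω,Δ). -/

import Mathlib

open Filter Metric

theorem stmt2 {X : Type*} [MetricSpace X] (Ω Δ : Set X)
    (hΩ : Ω.Nonempty) (hΔ : Δ.Nonempty) (Ξ : X → X) (η : ℝ) (hη : η ∈ Set.Ioo (0 : ℝ) 1)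
    (hcycΩ : Set.MapsTo Ξ Ω Δ) (hcycΔ : Set.MapsTo Ξ Δ Ω)
    (hbdd : ∀ x : X, Bornology.IsBounded (Set.range fun n => Ξ^[n] x))
    (hcontr : ∀ ς ∈ Ω, ∀ ϑ ∈ Δ,
      dist (Ξ ς) (Ξ ϑ) ≤ η * sSup { r : ℝ |
      (∃ i j : ℕ, Odd ((i : ℤ) - j) ∧ r = dist (Ξ^[i] ς) (Ξ^[j] ς)) ∨
      (∃ k l : ℕ, Odd ((k : ℤ) - l) ∧ r = dist (Ξ^[k] ϑ) (Ξ^[l] ϑ)) ∨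
      (∃ p q : ℕ, Even ((p : ℤ) - q) ∧ r = dist (Ξ^[p] ς) (Ξ^[q] ϑ)) }
        + (1 - η) * sInf (Set.image2 dist Ω Δ))
    (ς₀ : X) (hς₀ : ς₀ ∈ Ω) :
    ∀ a b : ℕ, Odd ((a : ℤ) - b) →
      dist (Ξ^[a] (Ξ ς₀)) (Ξ^[b] (Ξ ς₀)) ≤
        η * sSup { r : ℝ | ∃ i j : ℕ, Odd ((i : ℤ) - j) ∧ r = dist (Ξ^[i] ς₀) (Ξ^[j] ς₀) }
          + (1 - η) * sInf (Set.image2 dist Ω Δ) := by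
  set T : Set ℝ :=
    { r : ℝ | ∃ i j : ℕ, Odd ((i : ℤ) - j) ∧ r = dist (Ξ^[i] ς₀) (Ξ^[j] ς₀) } with hT
  have horb : ∀ n : ℕ, Ξ^[2*n] ς₀ ∈ Ω ∧ Ξ^[2*n+1] ς₀ ∈ Δ := by
    intro n
    induction n with
    | zero => exact ⟨hς₀, hcycΩ hς₀⟩
    | succ n ih =>
      have h1 : Ξ^[2*(n+1)] ς₀ ∈ Ω := by
        have e : Ξ^[2*(n+1)] ς₀ = Ξ (Ξ^[2*n+1] ς₀) := by
          rw [show 2*(n+1) = (2*n+1)+1 by ring, Function.iterate_succ_apply']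
        rw [e]; exact hcycΔ ih.2
      refine ⟨h1, ?_⟩
      rw [Function.iterate_succ_apply']
      exact hcycΩ h1
  obtain ⟨C, hC⟩ := Metric.isBounded_iff.1 (hbdd ς₀)
  have hTbdd : BddAbove T := by
    refine ⟨C, ?_⟩
    rintro r ⟨i, j, _, rfl⟩
    exact hC ⟨i, rfl⟩ ⟨j, rfl⟩
  have key : ∀ k l : ℕ, dist (Ξ^[2*k+1] ς₀) (Ξ^[2*l+1+1] ς₀) ≤
      η * sSup T + (1 - η) * sInf (Set.image2 dist Ω Δ) := by
    intro k l
    set ς := Ξ^[2*k] ς₀ with hς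
    set ϑ := Ξ^[2*l+1] ς₀ with hϑ
    have h := hcontr ς (horb k).1 ϑ (horb l).2
    have e1 : Ξ^[2*k+1] ς₀ = Ξ ς := Function.iterate_succ_apply' Ξ (2*k) ς₀
    have e2 : Ξ^[2*l+1+1] ς₀ = Ξ ϑ := Function.iterate_succ_apply' Ξ (2*l+1) ς₀
    rw [e1, e2]
    refine h.trans (add_le_add_left (mul_le_mul_of_nonneg_left ?_ hη.1.le) _)
    refine csSup_le_csSup hTbdd ⟨dist ς ϑ, Or.inr (Or.inr ⟨0, 0, by decide, by simp⟩)⟩ ?_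
    rintro r (⟨i, j, hij, rfl⟩ | ⟨i, j, hij, rfl⟩ | ⟨p, q, hpq, rfl⟩)
    · refine ⟨i + 2*k, j + 2*k, ?_, by rw [hς, ← Function.iterate_add_apply,
        ← Function.iterate_add_apply]⟩
      rw [Int.odd_iff] at hij ⊢; push_cast; omega
    · refine ⟨i + (2*l+1), j + (2*l+1), ?_, by rw [hϑ, ← Function.iterate_add_apply,
        ← Function.iterate_add_apply]⟩
      rw [Int.odd_iff] at hij ⊢; push_cast; omega
    · refine ⟨p + 2*k, q + (2*l+1), ?_, by rw [hς, hϑ, ← Function.iterate_add_apply,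
        ← Function.iterate_add_apply]⟩
      rw [Int.even_iff] at hpq; rw [Int.odd_iff]; push_cast; omega
  intro a b hab
  rw [Int.odd_iff] at hab
  rcases Nat.even_or_odd a with ⟨k, hk⟩ | ⟨k, hk⟩
  · -- a = 2k even, so b odd
    obtain ⟨l, hl⟩ : ∃ l, b = 2*l+1 := by
      rcases Nat.even_or_odd b with ⟨l, hl⟩ | ⟨l, hl⟩
      · exfalso; omega
      · exact ⟨l, by omega⟩
    have ea : Ξ^[a] (Ξ ς₀) = Ξ^[2*k+1] ς₀ := by
      rw [show 2*k+1 = a+1 by omega, Function.iterate_succ_apply]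
    have eb : Ξ^[b] (Ξ ς₀) = Ξ^[2*l+1+1] ς₀ := by
      rw [show 2*l+1+1 = b+1 by omega, Function.iterate_succ_apply]
    rw [ea, eb]; exact key k l
  · -- a odd, so b even
    obtain ⟨l, hl⟩ : ∃ l, b = 2*l := by
      rcases Nat.even_or_odd b with ⟨l, hl⟩ | ⟨l, hl⟩
      · exact ⟨l, by omega⟩
      · exfalso; omega
    have ea : Ξ^[a] (Ξ ς₀) = Ξ^[2*k+1+1] ς₀ := by
      rw [show 2*k+1+1 = a+1 by omega, Function.iterate_succ_apply]
    have eb : Ξ^[b] (Ξ ς₀) = Ξ^[2*l+1] ς₀ := by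
      rw [show 2*l+1 = b+1 by omega, Function.iterate_succ_apply]
    rw [ea, eb, dist_comm]
    exact key l k
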